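/- For an infinite alphabet Σ, the class H_{k,Σ} (pattern length at most k ≥ 1) on strings of length n has VC dimension at least ⌊log₂ n⌋ + 1: there exist d = ⌊log₂ n⌋ + 1 strings in Σ^n shattered using single-character patterns. -/
import Mathlib


/-- Pattern `p` (a list) occurs as a contiguous substring of `s : Fin n → A`. -/
def occursL {A : Type} {n : ℕ} (p : List A) (s : Fin n → A) : Prop :=
  ∃ i, ∃ _ : i + p.length ≤ n,
    ∀ t : Fin p.length, s ⟨i + t.val, by have := t.isLt; omega⟩ = p.get t

lemma occursL_singleton {A : Type} {n : ℕ} (c : A) (s : Fin n → A) :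
    occursL [c] s ↔ ∃ i : Fin n, s i = c := by
  constructor
  · rintro ⟨i, hi, h⟩
    refine ⟨⟨i, by simpa using hi⟩, ?_⟩
    simpa using h ⟨0, by simp⟩
  · rintro ⟨⟨i, hi⟩, h⟩
    have hle : i + ([c] : List A).length ≤ n := by
      simp only [List.length_cons, List.length_nil]; omega
    refine ⟨i, hle, fun t => ?_⟩
    have ht : t.val = 0 := by
      have := t.isLt
      simp only [List.length_cons, List.length_nil] at this
      omega
    simpa [ht] using h

/-- For an infinite alphabet, the substring-indicator class with pattern length
at most `k ≥ 1` on strings of length `n` has VC dimension at least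
`⌊log₂ n⌋ + 1`: there exist `⌊log₂ n⌋ + 1` strings shattered by it. -/
theorem vc_lower_infinite_alphabet (A : Type) [Infinite A]
    (n k : ℕ) (hn : 1 ≤ n) (hk : 1 ≤ k) :
    ∃ X : Finset (Fin n → A),
      X.card = Nat.log 2 n + 1 ∧
      (∀ f : (Fin n → A) → Bool, ∃ p : List A, p.length ≤ k ∧
        ∀ s ∈ X, (occursL p s ↔ f s = true)) := by
  classical
  obtain ⟨d, hd⟩ : ∃ d, d = Nat.log 2 n + 1 := ⟨_, rfl⟩
  -- symbols
  obtain ⟨ι⟩ : Nonempty (Option (Fin d → Bool) ↪ A) :=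
    ⟨((Fintype.equivFin (Option (Fin d → Bool))).toEmbedding.trans
      Fin.valEmbedding).trans (Infinite.natEmbedding A)⟩
  -- for each coordinate i, embed the set of labelings with bit i set into positions
  have hcard : ∀ i : Fin d,
      Fintype.card {g : Fin d → Bool // g i = true} ≤ Fintype.card (Fin n) := by
    intro i
    have hinj : Function.Injective
        (fun (g : {g : Fin d → Bool // g i = true}) (j : {j : Fin d // j ≠ i}) =>
          g.val j.val) := by
      rintro ⟨g, hg⟩ ⟨g', hg'⟩ h
      ext j
      show g j = g' j
      by_cases hj : j = i
      · subst hj; rw [hg, hg']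
      · exact congrFun h ⟨j, hj⟩
    have h1 := Fintype.card_le_of_injective _ hinj
    have h2 : Fintype.card ({j : Fin d // j ≠ i} → Bool) = 2 ^ (d - 1) := by
      rw [Fintype.card_fun]
      congr 1
      have : Fintype.card {j : Fin d // ¬ j = i} = Fintype.card (Fin d) -
          Fintype.card {j : Fin d // j = i} := Fintype.card_subtype_compl _
      simp only [Fintype.card_subtype_eq, Fintype.card_fin] at this
      exact this
    have h3 : 2 ^ (d - 1) ≤ n := by
      have := Nat.pow_log_le_self 2 (Nat.one_le_iff_ne_zero.mp hn)
      rw [hd]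
      simpa using this
    rw [Fintype.card_fin]
    exact le_trans h1 (le_of_eq_of_le h2 h3)
  have ψ : ∀ i : Fin d, {g : Fin d → Bool // g i = true} ↪ Fin n :=
    fun i => Classical.choice (Function.Embedding.nonempty_of_card_le (hcard i))
  -- strings
  obtain ⟨x, hx⟩ : ∃ x : Fin d → Fin n → A, ∀ i pos,
      x i pos = ι ((Function.partialInv (ψ i) pos).map Subtype.val) :=
    ⟨_, fun _ _ => rfl⟩
  -- key: symbol `ι (some g)` occurs in `x i` iff `g i = true`
  have key : ∀ (i : Fin d) (g : Fin d → Bool),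
      (∃ pos : Fin n, x i pos = ι (some g)) ↔ g i = true := by
    intro i g
    constructor
    · rintro ⟨pos, h⟩
      rw [hx] at h
      have h' := ι.injective h
      rcases Option.map_eq_some_iff.mp h' with ⟨g', hg', hval⟩
      rw [← hval]; exact g'.2
    · intro hg
      refine ⟨ψ i ⟨g, hg⟩, ?_⟩
      rw [hx, Function.partialInv_left (ψ i).injective]
      rfl
  have xinj : Function.Injective x := by
    intro i i' h
    set g : Fin d → Bool := fun m => decide (m = i) with hg
    have hgi : g i = true := by simp [hg]
    have h1 : ∃ pos : Fin n, x i' pos = ι (some g) := by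
      rw [← h]; exact (key i g).mpr hgi
    have := (key i' g).mp h1
    simpa [hg, eq_comm] using this
  refine ⟨Finset.image x Finset.univ, ?_, ?_⟩
  · rw [Finset.card_image_of_injective _ xinj, Finset.card_univ, Fintype.card_fin, hd]
  · intro f
    refine ⟨[ι (some (fun i => f (x i)))], by simpa using hk, ?_⟩
    intro s hs
    rcases Finset.mem_image.mp hs with ⟨i, _, rfl⟩
    rw [occursL_singleton]
    exact key i _
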